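/- (Lemma A1.) Let M₁,ₙ, M₂,ₙ ∈ (0,1) be sequences strictly increasing to 1, let V₁,ₙ := v₁(A₁,A₂) be the value of firm 1 for fractions (M₁,ₙ, M₂,ₙ), and let μ̃ₙ := μ̃(V₁,ₙ) and σ̃ₙ := σ̃(V₁,ₙ) be the moment-matched lognormal parameters. Then the sequence σ̃ₙ converges to a finite limit, while μ̃ₙ → +∞ as n → ∞. -/

import Mathlib

open Filter MeasureTheory ProbabilityTheory

open scoped Topology ENNReal NNReal

open Classical in
/-- The value of firm 1 under cross-ownership of equity only, as a (piecewise-defined)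
derivative of the exogenous asset values `(a₁, a₂)`:
it equals `(a₁ + M₁ a₂ − M₁ M₂ d₁ − M₁ d₂)/(1 − M₁ M₂)` on `A_ss`,
`a₁ + M₁ a₂ − M₁ d₂` on `A_ds`, and `a₁` on `A_sd ∪ A_dd`. -/
noncomputable def v1eq (d₁ d₂ M₁ M₂ a₁ a₂ : ℝ) : ℝ :=
  if d₁ + M₁ * d₂ ≤ a₁ + M₁ * a₂ ∧ M₂ * d₁ + d₂ ≤ M₂ * a₁ + a₂ then
    (a₁ + M₁ * a₂ - M₁ * M₂ * d₁ - M₁ * d₂) / (1 - M₁ * M₂)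
  else if a₁ + M₁ * a₂ < d₁ + M₁ * d₂ ∧ d₂ ≤ a₂ then
    a₁ + M₁ * a₂ - M₁ * d₂
  else a₁

lemma strictConvexOn_two_exp {α β a b : ℝ} (hα : 0 < α) (hβ : 0 < β) (hab : a ≠ 0 ∨ b ≠ 0) :
    StrictConvexOn ℝ Set.univ (fun x => α * Real.exp (a * x) + β * Real.exp (b * x)) := by
  refine ⟨convex_univ, fun x _ y _ hxy t s ht hs hts => ?_⟩
  have key_le : ∀ k : ℝ, Real.exp (k * (t * x + s * y))
      ≤ t * Real.exp (k * x) + s * Real.exp (k * y) := by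
    intro k
    have h := convexOn_exp.2 (Set.mem_univ (k * x)) (Set.mem_univ (k * y)) ht.le hs.le hts
    simp only [smul_eq_mul] at h
    have harg : k * (t * x + s * y) = t * (k * x) + s * (k * y) := by ring
    rw [harg]; exact h
  have key_lt : ∀ k : ℝ, k ≠ 0 → Real.exp (k * (t * x + s * y))
      < t * Real.exp (k * x) + s * Real.exp (k * y) := by
    intro k hk
    have hne : k * x ≠ k * y := fun h => hxy (mul_left_cancel₀ hk h)
    have h := strictConvexOn_exp.2 (Set.mem_univ (k * x)) (Set.mem_univ (k * y)) hne ht hs hts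
    simp only [smul_eq_mul] at h
    have harg : k * (t * x + s * y) = t * (k * x) + s * (k * y) := by ring
    rw [harg]; exact h
  simp only [smul_eq_mul]
  rcases hab with ha | hb
  · have h1 := key_lt a ha
    have h2 := key_le b
    nlinarith
  · have h1 := key_le a
    have h2 := key_lt b hb
    nlinarith

lemma level_finite {α β a b : ℝ} (hα : 0 < α) (hβ : 0 < β) (hab : a ≠ 0 ∨ b ≠ 0) (c : ℝ) :
    {x : ℝ | α * Real.exp (a * x) + β * Real.exp (b * x) = c}.Finite := by
  have hconv := strictConvexOn_two_exp hα hβ hab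
  set f : ℝ → ℝ := fun x => α * Real.exp (a * x) + β * Real.exp (b * x) with hf
  set S := {x : ℝ | f x = c} with hS
  have key : ∀ p q r : ℝ, p < q → q < r → p ∈ S → r ∈ S → q ∉ S := by
    intro p q r hpq hqr hp hr hq
    have hrp : 0 < r - p := by linarith
    set t : ℝ := (r - q) / (r - p) with htdef
    have ht : 0 < t := div_pos (by linarith) hrp
    have ht1 : t < 1 := (div_lt_one hrp).2 (by linarith)
    have hs : 0 < 1 - t := by linarith
    have hq' : t * p + (1 - t) * r = q := by
      have h' : t * (r - p) = r - q := by rw [htdef]; exact div_mul_cancel₀ _ hrp.ne'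
      linear_combination -h'
    have hlt := hconv.2 (Set.mem_univ p) (Set.mem_univ r)
      (ne_of_lt (lt_trans hpq hqr)) ht hs (by ring)
    rw [smul_eq_mul, smul_eq_mul, smul_eq_mul, smul_eq_mul, hq'] at hlt
    have hpc : f p = c := hp
    have hrc : f r = c := hr
    have hqc : f q = c := hq
    rw [hpc, hrc, hqc] at hlt
    nlinarith
  by_contra h
  have hinf : S.Infinite := h
  obtain ⟨x, hx⟩ := hinf.nonempty
  have h1 : (S \ {x}).Infinite := hinf.diff (Set.finite_singleton x)
  obtain ⟨y, hy⟩ := h1.nonempty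
  have h2 : ((S \ {x}) \ {y}).Infinite := h1.diff (Set.finite_singleton y)
  obtain ⟨z, hz⟩ := h2.nonempty
  obtain ⟨hyS, hyx⟩ := hy
  obtain ⟨⟨hzS, hzx⟩, hzy⟩ := hz
  simp only [Set.mem_singleton_iff] at hyx hzx hzy
  have tri : ∀ u v w : ℝ, u ∈ S → v ∈ S → w ∈ S → u < v → v < w → False :=
    fun u v w hu hv hw h1 h2 => key u v w h1 h2 hu hw hv
  rcases lt_trichotomy x y with hxy | hxy | hxy
  · rcases lt_trichotomy y z with hyz | hyz | hyz
    · exact tri x y z hx hyS hzS hxy hyz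
    · exact hzy hyz.symm
    · rcases lt_trichotomy x z with hxz | hxz | hxz
      · exact tri x z y hx hzS hyS hxz hyz
      · exact hzx hxz.symm
      · exact tri z x y hzS hx hyS hxz hxy
  · exact hyx hxy.symm
  · rcases lt_trichotomy x z with hxz | hxz | hxz
    · exact tri y x z hyS hx hzS hxy hxz
    · exact hzx hxz.symm
    · rcases lt_trichotomy y z with hyz | hyz | hyz
      · exact tri y z x hyS hzS hx hyz hxz
      · exact hzy hyz.symm
      · exact tri z y x hzS hyS hx hyz hxy


section v1eqLemmas

variable {d₁ d₂ M₁ M₂ a₁ a₂ : ℝ}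

lemma v1eq_nonneg (hd₁ : 0 < d₁) (hd₂ : 0 < d₂) (hM₁ : M₁ ∈ Set.Ioo (0:ℝ) 1)
    (hM₂ : M₂ ∈ Set.Ioo (0:ℝ) 1) (ha₁ : 0 < a₁) (ha₂ : 0 < a₂) :
    0 ≤ v1eq d₁ d₂ M₁ M₂ a₁ a₂ := by
  obtain ⟨hM₁0, hM₁1⟩ := hM₁
  obtain ⟨hM₂0, hM₂1⟩ := hM₂
  have hε : 0 < 1 - M₁ * M₂ := by nlinarith
  unfold v1eq
  split_ifs with h1 h2
  · obtain ⟨h1a, h1b⟩ := h1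
    apply div_nonneg
    · nlinarith [mul_pos hε hd₁]
    · nlinarith
  · obtain ⟨h2a, h2b⟩ := h2
    nlinarith [mul_nonneg hM₁0.le (sub_nonneg.2 h2b)]
  · linarith

lemma v1eq_mul_le (hd₁ : 0 < d₁) (hd₂ : 0 < d₂) (hM₁ : M₁ ∈ Set.Ioo (0:ℝ) 1)
    (hM₂ : M₂ ∈ Set.Ioo (0:ℝ) 1) (ha₁ : 0 < a₁) (ha₂ : 0 < a₂) :
    (1 - M₁ * M₂) * v1eq d₁ d₂ M₁ M₂ a₁ a₂ ≤ a₁ + a₂ := by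
  obtain ⟨hM₁0, hM₁1⟩ := hM₁
  obtain ⟨hM₂0, hM₂1⟩ := hM₂
  have hε : 0 < 1 - M₁ * M₂ := by nlinarith
  unfold v1eq
  split_ifs with h1 h2
  · rw [mul_div_cancel₀ _ hε.ne']
    nlinarith [mul_nonneg (mul_nonneg hM₁0.le hM₂0.le) hd₁.le, mul_pos hM₁0 hd₂,
      mul_lt_mul_of_pos_right hM₁1 ha₂]
  · obtain ⟨h2a, h2b⟩ := h2
    have hw0 : 0 ≤ a₁ + M₁ * a₂ - M₁ * d₂ := by
      nlinarith [mul_nonneg hM₁0.le (sub_nonneg.2 h2b)]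
    have hw1 : a₁ + M₁ * a₂ - M₁ * d₂ ≤ a₁ + a₂ := by
      nlinarith [mul_nonneg (by linarith : (0:ℝ) ≤ 1 - M₁) (sub_nonneg.2 h2b)]
    nlinarith [mul_nonneg (mul_pos hM₁0 hM₂0).le hw0]
  · nlinarith [mul_nonneg (mul_pos hM₁0 hM₂0).le ha₁.le]

lemma v1eq_le_of_lt (hd₁ : 0 < d₁) (hd₂ : 0 < d₂) (hM₁ : M₁ ∈ Set.Ioo (0:ℝ) 1)
    (hM₂ : M₂ ∈ Set.Ioo (0:ℝ) 1) (ha₁ : 0 < a₁) (ha₂ : 0 < a₂)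
    (h : a₁ + M₁ * a₂ < d₁ + M₁ * d₂) :
    v1eq d₁ d₂ M₁ M₂ a₁ a₂ ≤ a₁ + a₂ := by
  obtain ⟨hM₁0, hM₁1⟩ := hM₁
  obtain ⟨hM₂0, hM₂1⟩ := hM₂
  unfold v1eq
  rw [if_neg (by intro hc; exact absurd hc.1 (not_le.2 h))]
  split_ifs with h2
  · obtain ⟨h2a, h2b⟩ := h2
    nlinarith [mul_nonneg (by linarith : (0:ℝ) ≤ 1 - M₁) (sub_nonneg.2 h2b)]
  · linarith

lemma v1eq_of_cond (hM₁ : M₁ ∈ Set.Ioo (0:ℝ) 1) (hM₂ : M₂ ∈ Set.Ioo (0:ℝ) 1)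
    (h1 : d₁ + M₁ * d₂ ≤ a₁ + M₁ * a₂) (h2 : M₂ * d₁ + d₂ ≤ M₂ * a₁ + a₂) :
    (1 - M₁ * M₂) * v1eq d₁ d₂ M₁ M₂ a₁ a₂ = a₁ + M₁ * a₂ - M₁ * M₂ * d₁ - M₁ * d₂ := by
  obtain ⟨hM₁0, hM₁1⟩ := hM₁
  obtain ⟨hM₂0, hM₂1⟩ := hM₂
  have hε : 0 < 1 - M₁ * M₂ := by nlinarith
  unfold v1eq
  rw [if_pos ⟨h1, h2⟩, mul_div_cancel₀ _ hε.ne']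

end v1eqLemmas

lemma exists_Ioo_forall_gt {c : ℝ} (hc : c ≠ 0) (K : ℝ) :
    ∃ a b : ℝ, a < b ∧ ∀ z ∈ Set.Ioo a b, K < c * z := by
  rcases hc.lt_or_gt with h | h
  · refine ⟨K / c - 1, K / c, by linarith, fun z hz => ?_⟩
    have h2 := hz.2
    have := mul_lt_mul_of_neg_left h2 h
    rwa [mul_div_cancel₀ _ hc] at this
  · refine ⟨K / c, K / c + 1, by linarith, fun z hz => ?_⟩
    have h1 := hz.1
    have := mul_lt_mul_of_pos_left h1 h
    rwa [mul_div_cancel₀ _ hc] at this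


lemma integrable_exp_mul_gaussianPDFReal (t : ℝ) :
    Integrable (fun x => Real.exp (t * x) * gaussianPDFReal 0 1 x) := by
  have key : Integrable (fun x : ℝ => Real.exp (-(1/2 : ℝ) * (x - t) ^ 2)) := by
    have h := integrable_exp_neg_mul_sq (show (0:ℝ) < 1/2 by norm_num)
    exact h.comp_sub_right t
  refine (key.const_mul ((Real.sqrt (2 * Real.pi))⁻¹ * Real.exp (t ^ 2 / 2))).congr
    (ae_of_all _ fun x => ?_)
  simp only [gaussianPDFReal, NNReal.coe_one, mul_one, sub_zero]
  rw [mul_assoc, ← Real.exp_add, mul_comm (Real.exp (t * x)), mul_assoc, ← Real.exp_add]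
  congr 2
  ring

lemma integrable_exp_gaussian (t : ℝ) :
    Integrable (fun x => Real.exp (t * x)) (gaussianReal 0 1) := by
  rw [gaussianReal_of_var_ne_zero 0 one_ne_zero,
    integrable_withDensity_iff (measurable_gaussianPDF 0 1)
      (ae_of_all _ fun x => ENNReal.ofReal_lt_top)]
  refine (integrable_exp_mul_gaussianPDFReal t).congr (ae_of_all _ fun x => ?_)
  simp only [gaussianPDF_def, ENNReal.toReal_ofReal (gaussianPDFReal_nonneg 0 1 x)]

lemma gaussianReal_Ioo_pos {a b : ℝ} (h : a < b) : 0 < gaussianReal 0 1 (Set.Ioo a b) := by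
  rw [pos_iff_ne_zero]
  intro h0
  have := gaussianReal_absolutelyContinuous' 0 one_ne_zero h0
  rw [Real.volume_Ioo] at this
  simp only [ENNReal.ofReal_eq_zero, sub_nonpos] at this
  linarith

instance : NullSingletonClass (gaussianReal 0 1) :=
  ⟨fun x => gaussianReal_absolutelyContinuous 0 one_ne_zero (measure_singleton x)⟩

lemma gaussianReal_finite_null {s : Set ℝ} (hs : s.Finite) : gaussianReal 0 1 s = 0 :=
  hs.measure_zero _
lemma prob_linear_gt_pos {Ω : Type} [MeasurableSpace Ω] (P : Measure Ω) [IsProbabilityMeasure P]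
    (Z₁ Z₂ : Ω → ℝ) (hZ₁m : Measurable Z₁) (hZ₂m : Measurable Z₂)
    (hZ₁ : P.map Z₁ = gaussianReal 0 1) (hZ₂ : P.map Z₂ = gaussianReal 0 1)
    (hindep : IndepFun Z₁ Z₂ P) {c₁ c₂ : ℝ} (hc : ¬(c₁ = 0 ∧ c₂ = 0)) (K : ℝ) :
    0 < P {ω | K < c₁ * Z₁ ω + c₂ * Z₂ ω} := by
  have hmarg₁ : ∀ s : Set ℝ, MeasurableSet s → P (Z₁ ⁻¹' s) = gaussianReal 0 1 s := by
    intro s hs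
    rw [← hZ₁, Measure.map_apply hZ₁m hs]
  have hmarg₂ : ∀ s : Set ℝ, MeasurableSet s → P (Z₂ ⁻¹' s) = gaussianReal 0 1 s := by
    intro s hs
    rw [← hZ₂, Measure.map_apply hZ₂m hs]
  by_cases hc₁ : c₁ = 0
  · have hc₂ : c₂ ≠ 0 := fun h => hc ⟨hc₁, h⟩
    obtain ⟨a, b, hab, hgt⟩ := exists_Ioo_forall_gt hc₂ (K + |c₁|)
    have hsub : Z₁ ⁻¹' Set.Ioo 0 1 ∩ Z₂ ⁻¹' Set.Ioo a b ⊆ {ω | K < c₁ * Z₁ ω + c₂ * Z₂ ω} := by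
      rintro ω ⟨h₁, h₂⟩
      have hb := hgt _ h₂
      have habs : |c₁ * Z₁ ω| ≤ |c₁| := by
        rw [abs_mul]
        have h1 : |Z₁ ω| ≤ 1 := by
          rw [abs_le]
          obtain ⟨hl, hr⟩ := h₁
          constructor <;> linarith
        nlinarith [abs_nonneg c₁]
      have := neg_abs_le (c₁ * Z₁ ω)
      simp only [Set.mem_setOf_eq]
      linarith [habs, this]
    refine lt_of_lt_of_le ?_ (measure_mono hsub)
    rw [hindep.measure_inter_preimage_eq_mul _ _ measurableSet_Ioo measurableSet_Ioo,
      hmarg₁ _ measurableSet_Ioo, hmarg₂ _ measurableSet_Ioo]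
    exact ENNReal.mul_pos (gaussianReal_Ioo_pos one_pos).ne' (gaussianReal_Ioo_pos hab).ne'
  · obtain ⟨a, b, hab, hgt⟩ := exists_Ioo_forall_gt hc₁ (K + |c₂|)
    have hsub : Z₁ ⁻¹' Set.Ioo a b ∩ Z₂ ⁻¹' Set.Ioo 0 1 ⊆ {ω | K < c₁ * Z₁ ω + c₂ * Z₂ ω} := by
      rintro ω ⟨h₁, h₂⟩
      have hb := hgt _ h₁
      have habs : |c₂ * Z₂ ω| ≤ |c₂| := by
        rw [abs_mul]
        have h1 : |Z₂ ω| ≤ 1 := by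
          rw [abs_le]
          obtain ⟨hl, hr⟩ := h₂
          constructor <;> linarith
        nlinarith [abs_nonneg c₂]
      have := neg_abs_le (c₂ * Z₂ ω)
      simp only [Set.mem_setOf_eq]
      linarith [habs, this]
    refine lt_of_lt_of_le ?_ (measure_mono hsub)
    rw [hindep.measure_inter_preimage_eq_mul _ _ measurableSet_Ioo measurableSet_Ioo,
      hmarg₁ _ measurableSet_Ioo, hmarg₂ _ measurableSet_Ioo]
    exact ENNReal.mul_pos (gaussianReal_Ioo_pos hab).ne' (gaussianReal_Ioo_pos one_pos).ne'

lemma boundary_null {Ω : Type} [MeasurableSpace Ω] (P : Measure Ω) [IsProbabilityMeasure P]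
    (Z₁ Z₂ : Ω → ℝ) (hZ₁m : Measurable Z₁) (hZ₂m : Measurable Z₂)
    (hZ₁ : P.map Z₁ = gaussianReal 0 1) (hZ₂ : P.map Z₂ = gaussianReal 0 1)
    (hindep : IndepFun Z₁ Z₂ P)
    (μ₁ μ₂ c₁₁ c₁₂ c₂₁ c₂₂ : ℝ)
    (hc₁ : ¬(c₁₁ = 0 ∧ c₁₂ = 0)) (hc₂ : ¬(c₂₁ = 0 ∧ c₂₂ = 0)) (c : ℝ) :
    P {ω | Real.exp (μ₁ + c₁₁ * Z₁ ω + c₁₂ * Z₂ ω)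
        + Real.exp (μ₂ + c₂₁ * Z₁ ω + c₂₂ * Z₂ ω) = c} = 0 := by
  have hmap : P.map (fun ω => (Z₁ ω, Z₂ ω)) = (gaussianReal 0 1).prod (gaussianReal 0 1) := by
    have := (indepFun_iff_map_prod_eq_prod_map_map hZ₁m.aemeasurable hZ₂m.aemeasurable).1 hindep
    rw [this, hZ₁, hZ₂]
  set F : ℝ × ℝ → ℝ := fun p =>
    Real.exp (μ₁ + c₁₁ * p.1 + c₁₂ * p.2) + Real.exp (μ₂ + c₂₁ * p.1 + c₂₂ * p.2) with hF
  have hFm : Measurable F := by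
    apply Measurable.add <;> exact
      (Real.measurable_exp.comp ((measurable_const.add
        ((measurable_fst.const_mul _))).add ((measurable_snd.const_mul _))))
  have hS : MeasurableSet (F ⁻¹' {c}) := hFm (measurableSet_singleton c)
  have hset : {ω | Real.exp (μ₁ + c₁₁ * Z₁ ω + c₁₂ * Z₂ ω)
      + Real.exp (μ₂ + c₂₁ * Z₁ ω + c₂₂ * Z₂ ω) = c}
      = (fun ω => (Z₁ ω, Z₂ ω)) ⁻¹' (F ⁻¹' {c}) := by
    ext ω
    simp [hF, mul_comm]
  rw [hset, ← Measure.map_apply (hZ₁m.prodMk hZ₂m) hS, hmap]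
  by_cases h2 : c₁₂ = 0 ∧ c₂₂ = 0
  · obtain ⟨h12, h22⟩ := h2
    have h11 : c₁₁ ≠ 0 := fun h => hc₁ ⟨h, h12⟩
    have hSeq : F ⁻¹' {c} =
        {z₁ : ℝ | Real.exp μ₁ * Real.exp (c₁₁ * z₁) + Real.exp μ₂ * Real.exp (c₂₁ * z₁) = c}
          ×ˢ (Set.univ : Set ℝ) := by
      ext ⟨z₁, z₂⟩
      simp [hF, h12, h22, ← Real.exp_add, Set.mem_prod]
    rw [hSeq, Measure.prod_prod]
    rw [gaussianReal_finite_null (level_finite (Real.exp_pos μ₁) (Real.exp_pos μ₂)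
      (Or.inl h11) c), zero_mul]
  · rw [Measure.prod_apply hS]
    have hfiber : ∀ z₁ : ℝ, (gaussianReal 0 1) (Prod.mk z₁ ⁻¹' (F ⁻¹' {c})) = 0 := by
      intro z₁
      have heq : Prod.mk z₁ ⁻¹' (F ⁻¹' {c}) =
          {z₂ : ℝ | Real.exp (μ₁ + c₁₁ * z₁) * Real.exp (c₁₂ * z₂)
            + Real.exp (μ₂ + c₂₁ * z₁) * Real.exp (c₂₂ * z₂) = c} := by
        ext z₂
        simp [hF, ← Real.exp_add]
      rw [heq]
      exact gaussianReal_finite_null (level_finite (Real.exp_pos _) (Real.exp_pos _)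
        (not_and_or.1 h2) c)
    simp only [hfiber, lintegral_zero]
/-- The standard normal distribution function `Φ`. -/
noncomputable def stdNormalCdf (x : ℝ) : ℝ :=
  ((ProbabilityTheory.gaussianReal 0 1) (Set.Iic x)).toReal

/-- Lemma A1: under cross-ownership of equity only with lognormally
distributed exogenous asset values, as the cross-ownership fractions increase strictly
to 1, the moment-matched lognormal parameter `σ̃ₙ` converges to a finite limit while
`μ̃ₙ → +∞`. -/
theorem matched_lognormal_parameters_limit_equity_only
    (Ω : Type) [MeasurableSpace Ω] (P : Measure Ω) [IsProbabilityMeasure P]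
    (Z₁ Z₂ : Ω → ℝ) (hZ₁m : Measurable Z₁) (hZ₂m : Measurable Z₂)
    (hZ₁ : P.map Z₁ = gaussianReal 0 1) (hZ₂ : P.map Z₂ = gaussianReal 0 1)
    (hindep : IndepFun Z₁ Z₂ P)
    (μ₁ μ₂ c₁₁ c₁₂ c₂₁ c₂₂ : ℝ)
    (hc₁ : (c₁₁, c₁₂) ≠ ((0 : ℝ), (0 : ℝ))) (hc₂ : (c₂₁, c₂₂) ≠ ((0 : ℝ), (0 : ℝ)))
    (A₁ A₂ : Ω → ℝ)
    (hA₁ : A₁ = fun ω => Real.exp (μ₁ + c₁₁ * Z₁ ω + c₁₂ * Z₂ ω))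
    (hA₂ : A₂ = fun ω => Real.exp (μ₂ + c₂₁ * Z₁ ω + c₂₂ * Z₂ ω))
    (d₁ d₂ : ℝ) (hd₁ : 0 < d₁) (hd₂ : 0 < d₂)
    (M₁ M₂ : ℕ → ℝ)
    (hM₁ : ∀ n, M₁ n ∈ Set.Ioo (0 : ℝ) 1) (hM₂ : ∀ n, M₂ n ∈ Set.Ioo (0 : ℝ) 1)
    (hM₁mono : StrictMono M₁) (hM₂mono : StrictMono M₂)
    (hM₁lim : Tendsto M₁ atTop (nhds 1)) (hM₂lim : Tendsto M₂ atTop (nhds 1))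
    (V : ℕ → Ω → ℝ)
    (hV : ∀ n ω, V n ω = v1eq d₁ d₂ (M₁ n) (M₂ n) (A₁ ω) (A₂ ω))
    (μt σt : ℕ → ℝ)
    (hμt : ∀ n, μt n = (1 / 2) * Real.log ((∫ ω, V n ω ∂P) ^ 4 /
      (variance (V n) P + (∫ ω, V n ω ∂P) ^ 2)))
    (hσt : ∀ n, σt n = Real.sqrt (Real.log (variance (V n) P / (∫ ω, V n ω ∂P) ^ 2 + 1))) :
    (∃ L : ℝ, Tendsto σt atTop (nhds L)) ∧ Tendsto μt atTop atTop := by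
  have hc₁' : ¬(c₁₁ = 0 ∧ c₁₂ = 0) := by simpa [Prod.ext_iff] using hc₁
  have hc₂' : ¬(c₂₁ = 0 ∧ c₂₂ = 0) := by simpa [Prod.ext_iff] using hc₂
  set ε : ℕ → ℝ := fun n => 1 - M₁ n * M₂ n with hεdef
  have hεpos : ∀ n, 0 < ε n := by
    intro n
    obtain ⟨h10, h11⟩ := hM₁ n
    obtain ⟨h20, h21⟩ := hM₂ n
    simp only [hεdef]
    nlinarith
  have hεlim : Tendsto ε atTop (𝓝 0) := by
    have := tendsto_const_nhds (x := (1:ℝ)) (f := atTop (α := ℕ)) |>.sub (hM₁lim.mul hM₂lim)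
    simpa using this
  have hA₁pos : ∀ ω, 0 < A₁ ω := fun ω => by rw [hA₁]; exact Real.exp_pos _
  have hA₂pos : ∀ ω, 0 < A₂ ω := fun ω => by rw [hA₂]; exact Real.exp_pos _
  have hA₁m : Measurable A₁ := by
    rw [hA₁]
    exact Real.measurable_exp.comp
      (((measurable_const.add (hZ₁m.const_mul c₁₁)).add (hZ₂m.const_mul c₁₂)))
  have hA₂m : Measurable A₂ := by
    rw [hA₂]
    exact Real.measurable_exp.comp
      (((measurable_const.add (hZ₁m.const_mul c₂₁)).add (hZ₂m.const_mul c₂₂)))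
  -- integrability of exponentials
  have hexpint : ∀ m s t : ℝ, Integrable (fun ω => Real.exp (m + s * Z₁ ω + t * Z₂ ω)) P := by
    intro m s t
    have h1 : Integrable (fun ω => Real.exp (s * Z₁ ω)) P := by
      have h := integrable_exp_gaussian s
      rw [← hZ₁] at h
      exact (integrable_map_measure
        (Real.measurable_exp.comp (measurable_const_mul s)).aestronglyMeasurable
        hZ₁m.aemeasurable).1 h
    have h2 : Integrable (fun ω => Real.exp (t * Z₂ ω)) P := by
      have h := integrable_exp_gaussian t
      rw [← hZ₂] at h
      exact (integrable_map_measure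
        (Real.measurable_exp.comp (measurable_const_mul t)).aestronglyMeasurable
        hZ₂m.aemeasurable).1 h
    have hcomp : IndepFun (fun ω => Real.exp (s * Z₁ ω)) (fun ω => Real.exp (t * Z₂ ω)) P :=
      hindep.comp (Real.measurable_exp.comp (measurable_const_mul s))
        (Real.measurable_exp.comp (measurable_const_mul t))
    have hmul := hcomp.integrable_mul h1 h2
    refine (hmul.const_mul (Real.exp m)).congr (ae_of_all _ fun ω => ?_)
    simp only [Pi.mul_apply]
    rw [← Real.exp_add, ← Real.exp_add]
    ring_nf
  set B : Ω → ℝ := fun ω => A₁ ω + A₂ ω with hBdef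
  have hBpos : ∀ ω, 0 < B ω := fun ω => add_pos (hA₁pos ω) (hA₂pos ω)
  have hBm : Measurable B := hA₁m.add hA₂m
  have hB1 : Integrable B P := by
    have i1 := hexpint μ₁ c₁₁ c₁₂
    have i2 := hexpint μ₂ c₂₁ c₂₂
    refine (i1.add i2).congr (ae_of_all _ fun ω => ?_)
    simp [hBdef, hA₁, hA₂]
  have hB2 : Integrable (fun ω => B ω ^ 2) P := by
    have i1 := hexpint (2*μ₁) (2*c₁₁) (2*c₁₂)
    have i2 := (hexpint (μ₁+μ₂) (c₁₁+c₂₁) (c₁₂+c₂₂)).const_mul 2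
    have i3 := hexpint (2*μ₂) (2*c₂₁) (2*c₂₂)
    refine ((i1.add i2).add i3).congr (ae_of_all _ fun ω => ?_)
    have e : ∀ u v : ℝ, (Real.exp u + Real.exp v)^2
        = Real.exp (u+u) + 2*Real.exp (u+v) + Real.exp (v+v) := by
      intro u v
      rw [add_sq, pow_two, pow_two, mul_assoc, ← Real.exp_add, ← Real.exp_add, ← Real.exp_add]
    simp only [hBdef, hA₁, hA₂, Pi.add_apply]
    rw [e]
    congr 1
    · congr 1
      · exact congrArg Real.exp (by ring)
      · congr 1
        exact congrArg Real.exp (by ring)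
    · exact congrArg Real.exp (by ring)
  -- measurability of V n
  have hVmeas : ∀ n, Measurable (V n) := by
    intro n
    have hVn : V n = fun ω => v1eq d₁ d₂ (M₁ n) (M₂ n) (A₁ ω) (A₂ ω) := funext (hV n)
    rw [hVn]
    unfold v1eq
    have m1 : Measurable fun ω => A₁ ω + M₁ n * A₂ ω := hA₁m.add (hA₂m.const_mul _)
    have m2 : Measurable fun ω => M₂ n * A₁ ω + A₂ ω := (hA₁m.const_mul _).add hA₂m
    refine Measurable.ite ?_ ?_ (Measurable.ite ?_ ?_ ?_)
    · rw [Set.setOf_and]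
      exact (measurableSet_le measurable_const m1).inter (measurableSet_le measurable_const m2)
    · exact ((m1.sub measurable_const).sub measurable_const).div_const _
    · rw [Set.setOf_and]
      exact (measurableSet_lt m1 measurable_const).inter (measurableSet_le measurable_const hA₂m)
    · exact m1.sub measurable_const
    · exact hA₁m
  have hVnonneg : ∀ n ω, 0 ≤ V n ω := fun n ω => by
    rw [hV]; exact v1eq_nonneg hd₁ hd₂ (hM₁ n) (hM₂ n) (hA₁pos ω) (hA₂pos ω)
  set U : ℕ → Ω → ℝ := fun n ω => ε n * V n ω with hUdef
  have hUnonneg : ∀ n ω, 0 ≤ U n ω := fun n ω => mul_nonneg (hεpos n).le (hVnonneg n ω)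
  have hUle : ∀ n ω, U n ω ≤ B ω := by
    intro n ω
    simp only [hUdef, hεdef, hBdef]
    rw [hV]
    exact v1eq_mul_le hd₁ hd₂ (hM₁ n) (hM₂ n) (hA₁pos ω) (hA₂pos ω)
  have hUmeas : ∀ n, Measurable (U n) := fun n => (hVmeas n).const_mul (ε n)
  set G : Ω → ℝ := fun ω => max (A₁ ω + A₂ ω - (d₁ + d₂)) 0 with hGdef
  have hGm : Measurable G := ((hA₁m.add hA₂m).sub measurable_const).max measurable_const
  have hGnonneg : ∀ ω, 0 ≤ G ω := fun ω => le_max_right _ _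
  have hGle : ∀ ω, G ω ≤ B ω := by
    intro ω
    simp only [hGdef, hBdef]
    exact max_le (by linarith) (by linarith [hA₁pos ω, hA₂pos ω])
  have hGint : Integrable G P := by
    refine hB1.mono hGm.aestronglyMeasurable (ae_of_all _ fun ω => ?_)
    rw [Real.norm_eq_abs, Real.norm_eq_abs, abs_of_nonneg (hGnonneg ω),
      abs_of_pos (hBpos ω)]
    exact hGle ω
  have hG2int : Integrable (fun ω => G ω ^ 2) P := by
    refine hB2.mono (hGm.pow_const 2).aestronglyMeasurable (ae_of_all _ fun ω => ?_)
    rw [Real.norm_eq_abs, Real.norm_eq_abs, abs_of_nonneg (by positivity),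
      abs_of_nonneg (by positivity)]
    exact pow_le_pow_left₀ (hGnonneg ω) (hGle ω) 2
  -- a.e. convergence
  have hnull : P {ω | A₁ ω + A₂ ω = d₁ + d₂} = 0 := by
    simp only [hA₁, hA₂]
    exact boundary_null P Z₁ Z₂ hZ₁m hZ₂m hZ₁ hZ₂ hindep μ₁ μ₂ c₁₁ c₁₂ c₂₁ c₂₂ hc₁' hc₂' (d₁+d₂)
  have hae : ∀ᵐ ω ∂P, A₁ ω + A₂ ω ≠ d₁ + d₂ := by
    rw [ae_iff]
    have hseteq : {ω | ¬ A₁ ω + A₂ ω ≠ d₁ + d₂} = {ω | A₁ ω + A₂ ω = d₁ + d₂} := by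
      ext ω; simp
    rw [hseteq]
    exact hnull
  have hconv : ∀ ω, A₁ ω + A₂ ω ≠ d₁ + d₂ → Tendsto (fun n => U n ω) atTop (𝓝 (G ω)) := by
    intro ω hne
    have hp := hA₁pos ω
    have hq := hA₂pos ω
    rcases hne.lt_or_gt with hlt | hgt
    · have hG0 : G ω = 0 := max_eq_right (by linarith)
      rw [hG0]
      have hev : ∀ᶠ n in atTop, A₁ ω + M₁ n * A₂ ω < d₁ + M₁ n * d₂ := by
        have h1 : Tendsto (fun n => A₁ ω + M₁ n * A₂ ω) atTop (𝓝 (A₁ ω + A₂ ω)) := by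
          have := tendsto_const_nhds (x := A₁ ω) (f := atTop (α := ℕ)) |>.add
            (hM₁lim.mul_const (A₂ ω))
          simpa using this
        have h2 : Tendsto (fun n => d₁ + M₁ n * d₂) atTop (𝓝 (d₁ + d₂)) := by
          have := tendsto_const_nhds (x := d₁) (f := atTop (α := ℕ)) |>.add
            (hM₁lim.mul_const d₂)
          simpa using this
        have hT := h1.sub h2
        have := hT.eventually (eventually_lt_nhds
          (show A₁ ω + A₂ ω - (d₁ + d₂) < 0 by linarith))
        filter_upwards [this] with n hn
        linarith
      have hupper : Tendsto (fun n => ε n * (A₁ ω + A₂ ω)) atTop (𝓝 0) := by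
        have := hεlim.mul_const (A₁ ω + A₂ ω)
        simpa using this
      refine tendsto_of_tendsto_of_tendsto_of_le_of_le' tendsto_const_nhds hupper
        (Eventually.of_forall fun n => hUnonneg n ω) ?_
      filter_upwards [hev] with n hn
      simp only [hUdef]
      refine mul_le_mul_of_nonneg_left ?_ (hεpos n).le
      rw [hV]
      exact v1eq_le_of_lt hd₁ hd₂ (hM₁ n) (hM₂ n) hp hq hn
    · have hGv : G ω = A₁ ω + A₂ ω - (d₁ + d₂) := max_eq_left (by linarith)
      have hc1 : ∀ᶠ n in atTop, d₁ + M₁ n * d₂ ≤ A₁ ω + M₁ n * A₂ ω := by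
        have hT : Tendsto (fun n => A₁ ω + M₁ n * A₂ ω - (d₁ + M₁ n * d₂)) atTop
            (𝓝 (A₁ ω + A₂ ω - (d₁ + d₂))) := by
          have h1 := tendsto_const_nhds (x := A₁ ω) (f := atTop (α := ℕ)) |>.add
            (hM₁lim.mul_const (A₂ ω))
          have h2 := tendsto_const_nhds (x := d₁) (f := atTop (α := ℕ)) |>.add
            (hM₁lim.mul_const d₂)
          have := h1.sub h2
          simpa using this
        have := hT.eventually (eventually_gt_nhds
          (show (0:ℝ) < A₁ ω + A₂ ω - (d₁ + d₂) by linarith))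
        filter_upwards [this] with n hn
        linarith
      have hc2 : ∀ᶠ n in atTop, M₂ n * d₁ + d₂ ≤ M₂ n * A₁ ω + A₂ ω := by
        have hT : Tendsto (fun n => M₂ n * A₁ ω + A₂ ω - (M₂ n * d₁ + d₂)) atTop
            (𝓝 (A₁ ω + A₂ ω - (d₁ + d₂))) := by
          have h1 := (hM₂lim.mul_const (A₁ ω)).add
            (tendsto_const_nhds (x := A₂ ω) (f := atTop (α := ℕ)))
          have h2 := (hM₂lim.mul_const d₁).add
            (tendsto_const_nhds (x := d₂) (f := atTop (α := ℕ)))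
          have := h1.sub h2
          simpa using this
        have := hT.eventually (eventually_gt_nhds
          (show (0:ℝ) < A₁ ω + A₂ ω - (d₁ + d₂) by linarith))
        filter_upwards [this] with n hn
        linarith
      have hT : Tendsto (fun n => A₁ ω + M₁ n * A₂ ω - M₁ n * M₂ n * d₁ - M₁ n * d₂) atTop
          (𝓝 (A₁ ω + A₂ ω - (d₁ + d₂))) := by
        have h1 := tendsto_const_nhds (x := A₁ ω) (f := atTop (α := ℕ)) |>.add
          (hM₁lim.mul_const (A₂ ω))
        have h2 := (hM₁lim.mul hM₂lim).mul_const d₁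
        have h3 := hM₁lim.mul_const d₂
        have h4 := (h1.sub h2).sub h3
        have heq : A₁ ω + A₂ ω - (d₁ + d₂) = A₁ ω + 1 * A₂ ω - 1 * 1 * d₁ - 1 * d₂ := by ring
        rw [heq]
        exact h4
      rw [hGv]
      refine Tendsto.congr' ?_ hT
      filter_upwards [hc1, hc2] with n h1 h2
      simp only [hUdef, hεdef]
      rw [hV]
      exact (v1eq_of_cond (hM₁ n) (hM₂ n) h1 h2).symm
  -- dominated convergence
  have haconv : Tendsto (fun n => ∫ ω, U n ω ∂P) atTop (𝓝 (∫ ω, G ω ∂P)) := by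
    refine tendsto_integral_of_dominated_convergence B
      (fun n => (hUmeas n).aestronglyMeasurable) hB1
      (fun n => ae_of_all _ fun ω => ?_) (hae.mono fun ω hω => hconv ω hω)
    rw [Real.norm_eq_abs, abs_of_nonneg (hUnonneg n ω)]
    exact hUle n ω
  have hbconv : Tendsto (fun n => ∫ ω, U n ω ^ 2 ∂P) atTop (𝓝 (∫ ω, G ω ^ 2 ∂P)) := by
    refine tendsto_integral_of_dominated_convergence (fun ω => B ω ^ 2)
      (fun n => ((hUmeas n).pow_const 2).aestronglyMeasurable) hB2
      (fun n => ae_of_all _ fun ω => ?_) (hae.mono fun ω hω => (hconv ω hω).pow 2)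
    rw [Real.norm_eq_abs, abs_of_nonneg (by positivity)]
    exact pow_le_pow_left₀ (hUnonneg n ω) (hUle n ω) 2
  set IG : ℝ := ∫ ω, G ω ∂P with hIGdef
  set IG2 : ℝ := ∫ ω, G ω ^ 2 ∂P with hIG2def
  -- positivity of the limits
  have hsub : {ω | d₁ + d₂ < A₁ ω} ⊆ Function.support G := by
    intro ω hω
    simp only [Set.mem_setOf_eq] at hω
    have h0 : 0 < A₁ ω + A₂ ω - (d₁ + d₂) := by have := hA₂pos ω; linarith
    simp only [Function.mem_support, hGdef]
    have : 0 < max (A₁ ω + A₂ ω - (d₁ + d₂)) 0 := lt_max_iff.2 (Or.inl h0)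
    exact this.ne'
  have hPsub : 0 < P {ω | d₁ + d₂ < A₁ ω} := by
    have hset : {ω | d₁ + d₂ < A₁ ω}
        = {ω | Real.log (d₁ + d₂) - μ₁ < c₁₁ * Z₁ ω + c₁₂ * Z₂ ω} := by
      ext ω
      simp only [hA₁, Set.mem_setOf_eq]
      rw [show (d₁ + d₂ < Real.exp (μ₁ + c₁₁ * Z₁ ω + c₁₂ * Z₂ ω))
          ↔ Real.log (d₁ + d₂) < μ₁ + c₁₁ * Z₁ ω + c₁₂ * Z₂ ω from
        (Real.log_lt_iff_lt_exp (by positivity)).symm]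
      constructor <;> intro h <;> linarith
    rw [hset]
    exact prob_linear_gt_pos P Z₁ Z₂ hZ₁m hZ₂m hZ₁ hZ₂ hindep hc₁' _
  have hIGpos : 0 < IG := by
    rw [hIGdef, integral_pos_iff_support_of_nonneg hGnonneg hGint]
    exact lt_of_lt_of_le hPsub (measure_mono hsub)
  have hIG2pos : 0 < IG2 := by
    rw [hIG2def, integral_pos_iff_support_of_nonneg (fun ω => sq_nonneg (G ω)) hG2int]
    refine lt_of_lt_of_le hPsub (le_trans (measure_mono ?_) (measure_mono subset_rfl))
    intro ω hω
    have := hsub hω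
    simp only [Function.mem_support] at this ⊢
    exact pow_ne_zero 2 this
  set a : ℕ → ℝ := fun n => ∫ ω, U n ω ∂P with hadef
  set b : ℕ → ℝ := fun n => ∫ ω, U n ω ^ 2 ∂P with hbdef
  have hU2int : ∀ n, Integrable (fun ω => U n ω ^ 2) P := by
    intro n
    refine hB2.mono ((hUmeas n).pow_const 2).aestronglyMeasurable (ae_of_all _ fun ω => ?_)
    rw [Real.norm_eq_abs, Real.norm_eq_abs, abs_of_nonneg (by positivity),
      abs_of_nonneg (by positivity)]
    exact pow_le_pow_left₀ (hUnonneg n ω) (hUle n ω) 2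
  have hVL2 : ∀ n, MemLp (V n) 2 P := by
    intro n
    refine (memLp_two_iff_integrable_sq (hVmeas n).aestronglyMeasurable).2 ?_
    have hVU : (fun ω => V n ω ^ 2) = fun ω => ((ε n)⁻¹) ^ 2 * U n ω ^ 2 := by
      funext ω
      simp only [hUdef, mul_pow]
      rw [← mul_assoc, ← mul_pow, inv_mul_cancel₀ (hεpos n).ne', one_pow, one_mul]
    rw [hVU]
    exact (hU2int n).const_mul _
  have hEV : ∀ n, ∫ ω, V n ω ∂P = a n / ε n := by
    intro n
    have ha_eq : a n = ε n * ∫ ω, V n ω ∂P := integral_const_mul _ _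
    rw [ha_eq, mul_comm, mul_div_assoc, div_self (hεpos n).ne', mul_one]
  have hEV2 : ∀ n, ∫ ω, V n ω ^ 2 ∂P = b n / ε n ^ 2 := by
    intro n
    have hb_eq : b n = ε n ^ 2 * ∫ ω, V n ω ^ 2 ∂P := by
      rw [← integral_const_mul]
      exact integral_congr_ae (ae_of_all _ fun ω => by simp only [hUdef]; ring)
    rw [hb_eq, mul_comm, mul_div_assoc, div_self (pow_ne_zero 2 (hεpos n).ne'), mul_one]
  have hvar : ∀ n, variance (V n) P = (b n - a n ^ 2) / ε n ^ 2 := by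
    intro n
    rw [variance_eq_sub (hVL2 n)]
    have hpow : (fun ω => (V n ^ 2) ω) = fun ω => V n ω ^ 2 := by
      funext ω; simp
    calc ∫ ω, (V n ^ 2) ω ∂P - (∫ ω, V n ω ∂P) ^ 2
        = ∫ ω, V n ω ^ 2 ∂P - (∫ ω, V n ω ∂P) ^ 2 := by rw [show ∫ ω, (V n ^ 2) ω ∂P = ∫ ω, V n ω ^ 2 ∂P from by simp [Pi.pow_apply]]
      _ = b n / ε n ^ 2 - (a n / ε n) ^ 2 := by rw [hEV2, hEV]
      _ = (b n - a n ^ 2) / ε n ^ 2 := by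
          rw [div_pow, div_sub_div_same]
  have hev_a : ∀ᶠ n in atTop, 0 < a n := haconv.eventually (eventually_gt_nhds hIGpos)
  have hev_b : ∀ᶠ n in atTop, 0 < b n := hbconv.eventually (eventually_gt_nhds hIG2pos)
  constructor
  · refine ⟨Real.sqrt (Real.log (IG2 / IG ^ 2)), ?_⟩
    have hQ : Tendsto (fun n => b n / a n ^ 2) atTop (𝓝 (IG2 / IG ^ 2)) :=
      hbconv.div (haconv.pow 2) (by positivity)
    have hQpos : 0 < IG2 / IG ^ 2 := by positivity
    have hcont : Tendsto (fun n => Real.sqrt (Real.log (b n / a n ^ 2))) atTop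
        (𝓝 (Real.sqrt (Real.log (IG2 / IG ^ 2)))) :=
      (Real.continuous_sqrt.tendsto _).comp ((Real.continuousAt_log hQpos.ne').tendsto.comp hQ)
    refine hcont.congr' ?_
    filter_upwards [hev_a, hev_b] with n ha0 hb0
    rw [hσt n, hvar n, hEV n]
    have hε0 := hεpos n
    have harg : (b n - a n ^ 2) / ε n ^ 2 / (a n / ε n) ^ 2 + 1 = b n / a n ^ 2 := by
      field_simp
      ring
    rw [harg]
  · have h1 : Tendsto (fun n => (1/2 : ℝ) * Real.log (a n ^ 4 / b n)) atTop
        (𝓝 ((1/2) * Real.log (IG ^ 4 / IG2))) := by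
      have hQ : Tendsto (fun n => a n ^ 4 / b n) atTop (𝓝 (IG ^ 4 / IG2)) :=
        (haconv.pow 4).div hbconv hIG2pos.ne'
      exact ((Real.continuousAt_log (by positivity)).tendsto.comp hQ).const_mul _
    have h2 : Tendsto (fun n => -Real.log (ε n)) atTop atTop := by
      have hε0' : Tendsto ε atTop (𝓝[>] 0) :=
        tendsto_nhdsWithin_of_tendsto_nhds_of_eventually_within _ hεlim
          (Eventually.of_forall fun n => hεpos n)
      exact tendsto_neg_atBot_atTop.comp (Real.tendsto_log_nhdsGT_zero.comp hε0')
    have hsum := h1.add_atTop h2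
    refine Tendsto.congr' ?_ hsum
    filter_upwards [hev_a, hev_b] with n ha0 hb0
    rw [hμt n, hvar n, hEV n]
    have hε0 := hεpos n
    have harg : (a n / ε n) ^ 4 / ((b n - a n ^ 2) / ε n ^ 2 + (a n / ε n) ^ 2)
        = a n ^ 4 / (b n * ε n ^ 2) := by
      simp only [div_pow]
      rw [← add_div, sub_add_cancel]
      field_simp
    have hrhs : Real.log (a n ^ 4 / (b n * ε n ^ 2))
        = Real.log (a n ^ 4 / b n) - 2 * Real.log (ε n) := by
      rw [Real.log_div (by positivity) (by positivity),
        Real.log_div (by positivity) hb0.ne',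
        Real.log_mul hb0.ne' (pow_ne_zero 2 hε0.ne'), Real.log_pow, Real.log_pow]
      push_cast
      ring
    rw [harg, hrhs]
    ring
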